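/- Let n ≥ 3 and let A₁ ≥ A₂ ≥ … ≥ Aₙ > 0 be real numbers with A₁ < A₂ + … + Aₙ. Then there exist a real number R > 0 and real numbers β₁, …, βₙ with 0 < βᵢ < 2π for all i, β₁ + β₂ + … + βₙ = 2π, and Aᵢ = 2 R sin(βᵢ / 2) for all i. -/

import Mathlib

open Real

private lemma lt_arcsin_aux {x : ℝ} (hx : 0 < x) (hx1 : x ≤ 1) : x < Real.arcsin x := by
  have h1 : 0 < Real.arcsin x := Real.arcsin_pos.2 hx
  have h2 : Real.sin (Real.arcsin x) = x := Real.sin_arcsin (by linarith) hx1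
  have := Real.sin_lt h1
  linarith

private lemma arcsin_le_add_cube {x : ℝ} (hx : 0 ≤ x) (hx2 : x ≤ 1/2) :
    Real.arcsin x ≤ x + x ^ 3 := by
  rcases eq_or_lt_of_le hx with h | h
  · simp [← h]
  have hcub : x ^ 3 ≤ (1/2) ^ 3 := pow_le_pow_left₀ hx hx2 3
  have hsq : x ^ 2 ≤ (1/2) ^ 2 := pow_le_pow_left₀ hx hx2 2
  have h1 : x + x ^ 3 ≤ 1 := by nlinarith
  have hpos : 0 < x + x ^ 3 := by positivity
  have h2 : x ≤ Real.sin (x + x ^ 3) := by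
    have hsin := Real.sin_gt_sub_cube hpos
    have e1 : (1 + x ^ 2) ^ 3 ≤ 4 := by nlinarith [hsq, sq_nonneg x, sq_nonneg (x ^ 2), mul_nonneg (sq_nonneg x) (sq_nonneg x)]
    have e2 : (x + x ^ 3) ^ 3 = x ^ 3 * (1 + x ^ 2) ^ 3 := by ring
    have hkey : (x + x ^ 3) ^ 3 ≤ 4 * x ^ 3 := by
      rw [e2]; nlinarith [pow_pos h 3]
    nlinarith
  have hpi : x + x ^ 3 ≤ π / 2 := by
    have := Real.pi_gt_three
    linarith
  calc Real.arcsin x ≤ Real.arcsin (Real.sin (x + x ^ 3)) := Real.monotone_arcsin h2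
    _ = x + x ^ 3 := Real.arcsin_sin (by linarith) hpi

set_option maxHeartbeats 1000000 in
/-- **Existence of a cyclic polygon.**  Given `n ≥ 3` reals `A₁ ≥ ⋯ ≥ Aₙ > 0`
with `A₁ < A₂ + ⋯ + Aₙ`, there is a radius `R > 0` and central angles
`β₁, …, βₙ ∈ (0, 2π)` summing to `2π` with `Aᵢ = 2 R sin(βᵢ/2)` (the chord
length formula). -/
theorem exists_cyclic_polygon (n : ℕ) (hn : 3 ≤ n) (A : Fin n → ℝ)
    (hpos : ∀ i, 0 < A i) (hsorted : Antitone A)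
    (hlt : A ⟨0, by omega⟩ < ∑ i ∈ Finset.univ.erase ⟨0, by omega⟩, A i) :
    ∃ R : ℝ, 0 < R ∧ ∃ β : Fin n → ℝ,
      (∀ i, 0 < β i ∧ β i < 2 * π) ∧
      (∑ i, β i) = 2 * π ∧
      (∀ i, A i = 2 * R * Real.sin (β i / 2)) := by
  set i0 : Fin n := ⟨0, by omega⟩ with hi0
  have hA0 : 0 < A i0 := hpos i0
  have hmax : ∀ i, A i ≤ A i0 := fun i =>
    hsorted (show i0 ≤ i by rw [Fin.le_def]; exact Nat.zero_le _)
  have hπ : (0:ℝ) < π := Real.pi_pos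
  have hn3 : (3:ℝ) ≤ (n:ℝ) := by exact_mod_cast hn
  set S : ℝ → ℝ := fun t => ∑ i, Real.arcsin (A i * t) with hS
  have hst : ∀ t, S t = ∑ i, Real.arcsin (A i * t) := fun _ => rfl
  have hScont : Continuous S := by
    apply continuous_finset_sum
    intro i _
    exact Real.continuous_arcsin.comp (continuous_const.mul continuous_id)
  have hmem : ∀ {t : ℝ}, 0 < t → t ≤ 1 / A i0 → ∀ i, 0 < A i * t ∧ A i * t ≤ 1 := by
    intro t ht ht1 i
    refine ⟨mul_pos (hpos i) ht, ?_⟩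
    have h1 : A i * t ≤ A i0 * t := by nlinarith [hmax i, ht.le]
    have h2 : A i0 * t ≤ A i0 * (1 / A i0) := by nlinarith
    have h3 : A i0 * (1 / A i0) = 1 := by field_simp
    linarith
  by_cases hcase : π ≤ S (1 / A i0)
  · -- center inside or on the longest chord
    set t2 : ℝ := Real.sin (π / n) / A i0 with ht2def
    have hnpos : (0:ℝ) < n := by linarith
    have hsinpos : 0 < Real.sin (π / n) := by
      apply Real.sin_pos_of_pos_of_lt_pi
      · positivity
      · rw [div_lt_iff₀ hnpos]; nlinarith
    have ht2pos : 0 < t2 := div_pos hsinpos hA0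
    have ht2le : t2 ≤ 1 / A i0 := by
      rw [ht2def, div_le_div_iff₀ hA0 hA0]
      nlinarith [Real.sin_le_one (π / n)]
    have hpin : π / n ≤ π / 2 := by
      rw [div_le_div_iff₀ hnpos (by norm_num : (0:ℝ) < 2)]
      nlinarith
    have hSt2 : S t2 ≤ π := by
      have hbound : ∀ i : Fin n, Real.arcsin (A i * t2) ≤ π / n := by
        intro i
        have h1 : A i * t2 ≤ Real.sin (π / n) := by
          rw [ht2def, mul_div_assoc', div_le_iff₀ hA0]
          nlinarith [hmax i, hsinpos.le]
        calc Real.arcsin (A i * t2) ≤ Real.arcsin (Real.sin (π / n)) :=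
              Real.monotone_arcsin h1
          _ = π / n := Real.arcsin_sin
              (by linarith [div_pos hπ hnpos]) (by linarith)
      calc S t2 ≤ ∑ _i : Fin n, π / n := Finset.sum_le_sum (fun i _ => hbound i)
        _ = n * (π / n) := by rw [Finset.sum_const, Finset.card_univ, Fintype.card_fin,
              nsmul_eq_mul]
        _ = π := by field_simp
    have hiv : π ∈ S '' Set.Icc t2 (1 / A i0) :=
      intermediate_value_Icc ht2le hScont.continuousOn ⟨hSt2, hcase⟩
    obtain ⟨t, htmem, htS⟩ := hiv
    have ht : 0 < t := lt_of_lt_of_le ht2pos htmem.1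
    have ht1 : t ≤ 1 / A i0 := htmem.2
    refine ⟨1 / (2 * t), by positivity, fun i => 2 * Real.arcsin (A i * t), ?_, ?_, ?_⟩
    · intro i
      dsimp only
      obtain ⟨h1, h2⟩ := hmem ht ht1 i
      have e1 := Real.arcsin_pos.2 h1
      have e2 := Real.arcsin_le_pi_div_two (A i * t)
      constructor <;> linarith
    · calc (∑ i, 2 * Real.arcsin (A i * t)) = 2 * S t := by
            rw [hst, Finset.mul_sum]
        _ = 2 * π := by rw [htS]
    · intro i
      dsimp only
      obtain ⟨h1, h2⟩ := hmem ht ht1 i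
      rw [show 2 * Real.arcsin (A i * t) / 2 = Real.arcsin (A i * t) by ring,
        Real.sin_arcsin (by linarith) h2]
      field_simp
  · -- center on the far side of the longest chord
    push_neg at hcase
    have hsum : A i0 + ∑ i ∈ Finset.univ.erase i0, A i = ∑ i, A i :=
      Finset.add_sum_erase _ _ (Finset.mem_univ i0)
    set ε : ℝ := (∑ i, A i) - 2 * A i0 with hεdef
    have hε : 0 < ε := by rw [hεdef]; linarith [hsum, hlt]
    set t0 : ℝ := min (1 / (2 * A i0)) (Real.sqrt (ε / (4 * A i0 ^ 3))) with ht0def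
    have ht0 : 0 < t0 := lt_min (by positivity) (Real.sqrt_pos.2 (by positivity))
    have ht0half : t0 ≤ 1 / (2 * A i0) := min_le_left _ _
    have ht0le : t0 ≤ 1 / A i0 := by
      refine ht0half.trans ?_
      rw [div_le_div_iff₀ (by positivity) hA0]
      nlinarith
    have ht0sq : t0 ^ 2 ≤ ε / (4 * A i0 ^ 3) := by
      have h1 : t0 ≤ Real.sqrt (ε / (4 * A i0 ^ 3)) := min_le_right _ _
      have h2 : Real.sqrt (ε / (4 * A i0 ^ 3)) ^ 2 = ε / (4 * A i0 ^ 3) :=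
        Real.sq_sqrt (by positivity)
      nlinarith [ht0.le]
    set D : ℝ → ℝ := fun t => S t - 2 * Real.arcsin (A i0 * t) with hD
    have hDcont : Continuous D :=
      hScont.sub (continuous_const.mul
        (Real.continuous_arcsin.comp (continuous_const.mul continuous_id)))
    have hD1 : D (1 / A i0) < 0 := by
      show S (1 / A i0) - 2 * Real.arcsin (A i0 * (1 / A i0)) < 0
      have h1 : A i0 * (1 / A i0) = 1 := by field_simp
      rw [h1, Real.arcsin_one]
      linarith
    have hD0 : 0 < D t0 := by
      show 0 < S t0 - 2 * Real.arcsin (A i0 * t0)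
      have hA0t0 : A i0 * t0 ≤ 1 / 2 := by
        have h := mul_le_mul_of_nonneg_left ht0half hA0.le
        calc A i0 * t0 ≤ A i0 * (1 / (2 * A i0)) := h
          _ = 1 / 2 := by field_simp
      have hlo : ∀ i : Fin n, A i * t0 ≤ Real.arcsin (A i * t0) := fun i =>
        (lt_arcsin_aux (hmem ht0 ht0le i).1 (hmem ht0 ht0le i).2).le
      have hhi : Real.arcsin (A i0 * t0) ≤ A i0 * t0 + (A i0 * t0) ^ 3 :=
        arcsin_le_add_cube (by positivity) hA0t0
      have hSlo : (∑ i, A i) * t0 ≤ S t0 := by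
        rw [hst, Finset.sum_mul]
        exact Finset.sum_le_sum (fun i _ => hlo i)
      have hcube : 2 * (A i0 * t0) ^ 3 ≤ (ε / 2) * t0 := by
        have h1 : (A i0 * t0) ^ 3 = A i0 ^ 3 * t0 ^ 2 * t0 := by ring
        have h2 : A i0 ^ 3 * t0 ^ 2 ≤ ε / 4 := by
          have h3 := mul_le_mul_of_nonneg_left ht0sq (by positivity : (0:ℝ) ≤ A i0 ^ 3)
          calc A i0 ^ 3 * t0 ^ 2 ≤ A i0 ^ 3 * (ε / (4 * A i0 ^ 3)) := h3
            _ = ε / 4 := by field_simp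
        rw [h1]
        nlinarith [ht0.le]
      have hεt : (∑ i, A i) * t0 - 2 * (A i0 * t0) = ε * t0 := by rw [hεdef]; ring
      nlinarith [mul_pos hε ht0]
    have hiv : (0:ℝ) ∈ D '' Set.Icc t0 (1 / A i0) :=
      intermediate_value_Icc' ht0le hDcont.continuousOn ⟨hD1.le, hD0.le⟩
    obtain ⟨t, htmem, htD⟩ := hiv
    have htD' : S t - 2 * Real.arcsin (A i0 * t) = 0 := htD
    have ht : 0 < t := lt_of_lt_of_le ht0 htmem.1
    have ht1 : t ≤ 1 / A i0 := htmem.2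
    have harc0pos : 0 < Real.arcsin (A i0 * t) := Real.arcsin_pos.2 (hmem ht ht1 i0).1
    have harc0le : Real.arcsin (A i0 * t) ≤ π / 2 := Real.arcsin_le_pi_div_two _
    refine ⟨1 / (2 * t), by positivity,
      Function.update (fun j => 2 * Real.arcsin (A j * t)) i0
        (2 * π - 2 * Real.arcsin (A i0 * t)), ?_, ?_, ?_⟩
    · intro i
      rcases eq_or_ne i i0 with h | h
      · subst h
        rw [Function.update_self]
        constructor <;> linarith
      · rw [Function.update_of_ne h]
        obtain ⟨h1, h2⟩ := hmem ht ht1 i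
        have e1 := Real.arcsin_pos.2 h1
        have e2 := Real.arcsin_le_pi_div_two (A i * t)
        constructor <;> linarith
    · rw [Finset.sum_update_of_mem (Finset.mem_univ i0)]
      have hadd : Real.arcsin (A i0 * t) +
          ∑ j ∈ Finset.univ.erase i0, Real.arcsin (A j * t)
          = ∑ j, Real.arcsin (A j * t) :=
        Finset.add_sum_erase _ (fun j => Real.arcsin (A j * t)) (Finset.mem_univ i0)
      have hmul : ∑ j ∈ Finset.univ.erase i0, 2 * Real.arcsin (A j * t)
          = 2 * ∑ j ∈ Finset.univ.erase i0, Real.arcsin (A j * t) :=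
        (Finset.mul_sum _ _ _).symm
      rw [hst] at htD'
      rw [← Finset.erase_eq, hmul]
      linarith [hadd, htD']
    · intro i
      rcases eq_or_ne i i0 with h | h
      · subst h
        rw [Function.update_self,
          show (2 * π - 2 * Real.arcsin (A i0 * t)) / 2
              = π - Real.arcsin (A i0 * t) by ring,
          Real.sin_pi_sub,
          Real.sin_arcsin (by linarith [(hmem ht ht1 i0).1]) (hmem ht ht1 i0).2]
        field_simp
      · rw [Function.update_of_ne h,
          show 2 * Real.arcsin (A i * t) / 2 = Real.arcsin (A i * t) by ring,
          Real.sin_arcsin (by linarith [(hmem ht ht1 i).1]) (hmem ht ht1 i).2]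
        field_simp
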